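/- arXiv:2509.05930 — 4 statements merged into one kernel-verified Lean document; each statement's English description precedes it below -/
import Mathlib

section
/- Let f : ℝ^d → ℝ be m-strongly convex and ℓ-smooth, let λ₁, λ₂ > 0, w ∈ ℕ, τ, z ∈ ℝ^d, and define φ(x; u, h) = ‖(x+h)/(w+1) − τ‖² + λ₁ f(x − u) + λ₂ ‖x − z‖². Let x(u,h) = argmin_x φ(x; u, h) and η = 2/(w+1)² + λ₁ m + 2λ₂. Then for all u, û, h, ĥ ∈ ℝ^d: ‖x(û, ĥ) − x(u, h)‖ ≤ (1/η)[λ₁ ℓ ‖û − u‖ + (2/(w+1)²) ‖ĥ − h‖]. -/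
open RealInnerProductSpace

section Helpers

variable {E : Type*} [NormedAddCommGroup E] [InnerProductSpace ℝ E] [CompleteSpace E]

omit [CompleteSpace E] in
lemma norm_sq_interp (a v : E) (t : ℝ) :
    ‖a + t • v‖ ^ 2 = (1 - t) * ‖a‖ ^ 2 + t * ‖a + v‖ ^ 2 - t * (1 - t) * ‖v‖ ^ 2 := by
  rw [norm_add_sq_real, norm_add_sq_real, real_inner_smul_right, norm_smul,
    Real.norm_eq_abs, mul_pow, sq_abs]
  ring

omit [CompleteSpace E] in
lemma four_point (p q s r : E) :
    ‖p + s‖ ^ 2 - ‖p + r‖ ^ 2 - ‖q + s‖ ^ 2 + ‖q + r‖ ^ 2 = 2 * ⟪p - q, s - r⟫ := by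
  rw [norm_add_sq_real, norm_add_sq_real, norm_add_sq_real, norm_add_sq_real,
    inner_sub_left, inner_sub_right, inner_sub_right]
  ring

lemma f_interp (f : E → ℝ) (m : ℝ)
    (hstrong : ∀ a b : E, f a + ⟪gradient f a, b - a⟫ + m / 2 * ‖b - a‖ ^ 2 ≤ f b)
    (a v : E) (t : ℝ) (ht0 : 0 ≤ t) (ht1 : t ≤ 1) :
    f (a + t • v) ≤ (1 - t) * f a + t * f (a + v) - m / 2 * (t * (1 - t)) * ‖v‖ ^ 2 := by
  have e1 : a - (a + t • v) = (-t) • v := by module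
  have e2 : a + v - (a + t • v) = (1 - t) • v := by module
  have h1 := hstrong (a + t • v) a
  have h2 := hstrong (a + t • v) (a + v)
  rw [e1] at h1
  rw [e2] at h2
  rw [real_inner_smul_right, norm_smul, Real.norm_eq_abs] at h1 h2
  rw [mul_pow, sq_abs] at h1 h2
  nlinarith [mul_le_mul_of_nonneg_left h1 (by linarith : (0:ℝ) ≤ 1 - t),
    mul_le_mul_of_nonneg_left h2 ht0]

lemma diff_lipschitz (f : E → ℝ) (ℓ : ℝ) (hdiff : Differentiable ℝ f)
    (hsmooth : ∀ a b, ‖gradient f a - gradient f b‖ ≤ ℓ * ‖a - b‖)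
    (u hatu : E) (x y : E) :
    f (x - hatu) - f (x - u) - (f (y - hatu) - f (y - u)) ≤ ℓ * ‖hatu - u‖ * ‖x - y‖ := by
  set g : E → ℝ := fun x => f (x - hatu) - f (x - u) with hg
  have hderiv : ∀ p : E, HasFDerivAt g (fderiv ℝ f (p - hatu) - fderiv ℝ f (p - u)) p := by
    intro p
    have hid : HasFDerivAt (fun y : E => y - hatu) (ContinuousLinearMap.id ℝ E) p :=
      (hasFDerivAt_id p).sub_const hatu
    have hid2 : HasFDerivAt (fun y : E => y - u) (ContinuousLinearMap.id ℝ E) p :=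
      (hasFDerivAt_id p).sub_const u
    have h1 : HasFDerivAt (fun y : E => f (y - hatu)) (fderiv ℝ f (p - hatu)) p := by
      exact (hdiff (p - hatu)).hasFDerivAt.comp p hid
    have h2 : HasFDerivAt (fun y : E => f (y - u)) (fderiv ℝ f (p - u)) p := by
      exact (hdiff (p - u)).hasFDerivAt.comp p hid2
    exact h1.sub h2
  have hbound : ∀ p : E, ‖fderiv ℝ f (p - hatu) - fderiv ℝ f (p - u)‖ ≤ ℓ * ‖hatu - u‖ := by
    intro p
    have : ‖fderiv ℝ f (p - hatu) - fderiv ℝ f (p - u)‖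
        = ‖gradient f (p - hatu) - gradient f (p - u)‖ := by
      rw [gradient, gradient, ← map_sub, LinearIsometryEquiv.norm_map]
    rw [this]
    calc ‖gradient f (p - hatu) - gradient f (p - u)‖ ≤ ℓ * ‖(p - hatu) - (p - u)‖ :=
          hsmooth _ _
      _ = ℓ * ‖hatu - u‖ := by rw [show (p - hatu) - (p - u) = -(hatu - u) by module, norm_neg]
  have key := Convex.norm_image_sub_le_of_norm_hasFDerivWithin_le
    (fun p _ => (hderiv p).hasFDerivWithinAt) (fun p _ => hbound p)
    convex_univ (Set.mem_univ y) (Set.mem_univ x)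
  calc f (x - hatu) - f (x - u) - (f (y - hatu) - f (y - u)) = g x - g y := rfl
    _ ≤ ‖g x - g y‖ := le_abs_self _
    _ ≤ ℓ * ‖hatu - u‖ * ‖x - y‖ := key

omit [CompleteSpace E] in
lemma strong_min (ψ : E → ℝ) (xs : E) (hmin : ∀ x, ψ xs ≤ ψ x) (η : ℝ)
    (hseg : ∀ x : E, ∀ t ∈ Set.Ioo (0:ℝ) 1,
      ψ (xs + t • (x - xs)) ≤ (1 - t) * ψ xs + t * ψ x - η / 2 * (t * (1 - t)) * ‖x - xs‖ ^ 2)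
    (x : E) : ψ xs + η / 2 * ‖x - xs‖ ^ 2 ≤ ψ x := by
  set N := ‖x - xs‖ ^ 2 with hN
  have key : ∀ t ∈ Set.Ioo (0:ℝ) 1, η / 2 * (1 - t) * N ≤ ψ x - ψ xs := by
    intro t ht
    have h1 := hseg x t ht
    have h2 := hmin (xs + t • (x - xs))
    have ht0 : 0 < t := ht.1
    have h3 : η / 2 * (1 - t) * N * t ≤ (ψ x - ψ xs) * t := by rw [hN]; nlinarith
    exact le_of_mul_le_mul_right h3 ht0
  have hmem : Set.Ioo (0:ℝ) 1 ∈ nhdsWithin (0:ℝ) (Set.Ioi 0) :=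
    Ioo_mem_nhdsGT_of_mem (by norm_num : (0:ℝ) ∈ Set.Ico (0:ℝ) 1)
  have tend : Filter.Tendsto (fun t : ℝ => η / 2 * (1 - t) * N)
      (nhdsWithin (0:ℝ) (Set.Ioi 0)) (nhds (η / 2 * N)) := by
    have hc : Continuous (fun t : ℝ => η / 2 * (1 - t) * N) := by continuity
    have h := (hc.tendsto 0).mono_left (nhdsWithin_le_nhds (s := Set.Ioi (0:ℝ)))
    simpa using h
  have := le_of_tendsto tend (Filter.eventually_of_mem hmem key)
  linarith

end Helpers

set_option maxHeartbeats 1000000 in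
/-- Lipschitz stability of the minimizer of
`φ(x; u, h) = ‖(x+h)/(w+1) − τ‖² + λ₁ f(x − u) + λ₂ ‖x − z‖²`
with respect to the adversary target `u` and the history aggregate `h`. -/
theorem stmt_3 (d : ℕ) (f : EuclideanSpace ℝ (Fin d) → ℝ) (m ℓ lam₁ lam₂ : ℝ) (w : ℕ)
    (τ z : EuclideanSpace ℝ (Fin d))
    (hm : 0 < m) (hℓ : 0 < ℓ) (hlam₁ : 0 < lam₁) (hlam₂ : 0 < lam₂)
    (hdiff : Differentiable ℝ f)
    (hstrong : ∀ a b : EuclideanSpace ℝ (Fin d),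
      f a + ⟪gradient f a, b - a⟫ + m / 2 * ‖b - a‖ ^ 2 ≤ f b)
    (hsmooth : ∀ a b, ‖gradient f a - gradient f b‖ ≤ ℓ * ‖a - b‖)
    (φ : EuclideanSpace ℝ (Fin d) → EuclideanSpace ℝ (Fin d) →
      EuclideanSpace ℝ (Fin d) → ℝ)
    (hφ : ∀ u h xx, φ u h xx =
      ‖((w : ℝ) + 1)⁻¹ • (xx + h) - τ‖ ^ 2 + lam₁ * f (xx - u) + lam₂ * ‖xx - z‖ ^ 2)
    (xmin : EuclideanSpace ℝ (Fin d) → EuclideanSpace ℝ (Fin d) →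
      EuclideanSpace ℝ (Fin d))
    (hxmin : ∀ u h xx, φ u h (xmin u h) ≤ φ u h xx)
    (η : ℝ) (hη : η = 2 / ((w : ℝ) + 1) ^ 2 + lam₁ * m + 2 * lam₂)
    (u hatu h hath : EuclideanSpace ℝ (Fin d)) :
    ‖xmin hatu hath - xmin u h‖ ≤
      (1 / η) * (lam₁ * ℓ * ‖hatu - u‖ + 2 / ((w : ℝ) + 1) ^ 2 * ‖hath - h‖) := by
  have hw : ((w : ℝ) + 1) ≠ 0 := by positivity
  set c : ℝ := ((w : ℝ) + 1)⁻¹ with hcdef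
  have hc2 : c ^ 2 = (((w : ℝ) + 1) ^ 2)⁻¹ := by rw [hcdef, inv_pow]
  have hη2 : η / 2 = c ^ 2 + lam₁ * (m / 2) + lam₂ := by
    rw [hη, hc2]; field_simp
  have hη0 : 0 < η := by
    rw [hη]; positivity
  -- segment inequality for φ uu hh
  have hseg : ∀ (uu hh xs x : EuclideanSpace ℝ (Fin d)), ∀ t ∈ Set.Ioo (0:ℝ) 1,
      φ uu hh (xs + t • (x - xs)) ≤
        (1 - t) * φ uu hh xs + t * φ uu hh x - η / 2 * (t * (1 - t)) * ‖x - xs‖ ^ 2 := by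
    intro uu hh xs x t ht
    have ht0 : (0:ℝ) ≤ t := ht.1.le
    have ht1 : t ≤ 1 := ht.2.le
    have e1 : c • (xs + t • (x - xs) + hh) - τ = (c • (xs + hh) - τ) + t • (c • (x - xs)) := by
      module
    have e1' : (c • (xs + hh) - τ) + c • (x - xs) = c • (x + hh) - τ := by module
    have e2 : xs + t • (x - xs) - z = (xs - z) + t • (x - xs) := by module
    have e2' : (xs - z) + (x - xs) = x - z := by module
    have e3 : xs + t • (x - xs) - uu = (xs - uu) + t • (x - xs) := by module
    have e3' : (xs - uu) + (x - xs) = x - uu := by module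
    have q1 : ‖c • (xs + t • (x - xs) + hh) - τ‖ ^ 2 =
        (1 - t) * ‖c • (xs + hh) - τ‖ ^ 2 + t * ‖c • (x + hh) - τ‖ ^ 2
          - t * (1 - t) * (c ^ 2 * ‖x - xs‖ ^ 2) := by
      rw [e1, norm_sq_interp, e1', norm_smul, Real.norm_eq_abs, mul_pow, sq_abs]
    have q2 : ‖xs + t • (x - xs) - z‖ ^ 2 =
        (1 - t) * ‖xs - z‖ ^ 2 + t * ‖x - z‖ ^ 2 - t * (1 - t) * ‖x - xs‖ ^ 2 := by
      rw [e2, norm_sq_interp, e2']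
    have q3 : f (xs + t • (x - xs) - uu) ≤
        (1 - t) * f (xs - uu) + t * f (x - uu) - m / 2 * (t * (1 - t)) * ‖x - xs‖ ^ 2 := by
      rw [e3]
      have := f_interp f m hstrong (xs - uu) (x - xs) t ht0 ht1
      rwa [e3'] at this
    have q3' : lam₁ * f (xs + t • (x - xs) - uu) ≤
        lam₁ * ((1 - t) * f (xs - uu) + t * f (x - uu)
          - m / 2 * (t * (1 - t)) * ‖x - xs‖ ^ 2) :=
      mul_le_mul_of_nonneg_left q3 hlam₁.le
    rw [hφ, hφ, hφ]
    have hfin : (1 - t) * ‖c • (xs + hh) - τ‖ ^ 2 + t * ‖c • (x + hh) - τ‖ ^ 2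
          - t * (1 - t) * (c ^ 2 * ‖x - xs‖ ^ 2)
        + lam₁ * ((1 - t) * f (xs - uu) + t * f (x - uu)
          - m / 2 * (t * (1 - t)) * ‖x - xs‖ ^ 2)
        + lam₂ * ((1 - t) * ‖xs - z‖ ^ 2 + t * ‖x - z‖ ^ 2 - t * (1 - t) * ‖x - xs‖ ^ 2)
        = (1 - t) * (‖c • (xs + hh) - τ‖ ^ 2 + lam₁ * f (xs - uu) + lam₂ * ‖xs - z‖ ^ 2)
          + t * (‖c • (x + hh) - τ‖ ^ 2 + lam₁ * f (x - uu) + lam₂ * ‖x - z‖ ^ 2)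
          - η / 2 * (t * (1 - t)) * ‖x - xs‖ ^ 2 := by
      linear_combination (t * (1 - t) * ‖x - xs‖ ^ 2) * hη2
    have q2' : lam₂ * ‖xs + t • (x - xs) - z‖ ^ 2 =
        lam₂ * ((1 - t) * ‖xs - z‖ ^ 2 + t * ‖x - z‖ ^ 2 - t * (1 - t) * ‖x - xs‖ ^ 2) := by
      rw [q2]
    linarith [q1, q2', q3']
  -- strong convexity at the minimizers
  set x₁ : EuclideanSpace ℝ (Fin d) := xmin u h with hx1
  set x₂ : EuclideanSpace ℝ (Fin d) := xmin hatu hath with hx2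
  have hA := strong_min (φ u h) x₁ (hxmin u h) η (fun x t ht => hseg u h x₁ x t ht) x₂
  have hB := strong_min (φ hatu hath) x₂ (hxmin hatu hath)
    η (fun x t ht => hseg hatu hath x₂ x t ht) x₁
  have hnormrev : ‖x₁ - x₂‖ = ‖x₂ - x₁‖ := norm_sub_rev _ _
  set N : ℝ := ‖x₂ - x₁‖ with hNdef
  -- difference identity
  have ep1 : c • (x₁ + hath) - τ = c • x₁ + (c • hath - τ) := by module
  have ep2 : c • (x₁ + h) - τ = c • x₁ + (c • h - τ) := by module
  have ep3 : c • (x₂ + hath) - τ = c • x₂ + (c • hath - τ) := by module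
  have ep4 : c • (x₂ + h) - τ = c • x₂ + (c • h - τ) := by module
  have hfp := four_point (c • x₁) (c • x₂) (c • hath - τ) (c • h - τ)
  have hsub1 : c • x₁ - c • x₂ = c • (x₁ - x₂) := by module
  have hsub2 : (c • hath - τ) - (c • h - τ) = c • (hath - h) := by module
  rw [hsub1, hsub2, real_inner_smul_left, real_inner_smul_right] at hfp
  have hD : φ hatu hath x₁ - φ u h x₁ - (φ hatu hath x₂ - φ u h x₂)
      = lam₁ * (f (x₁ - hatu) - f (x₁ - u) - (f (x₂ - hatu) - f (x₂ - u)))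
        + 2 * (c ^ 2 * ⟪x₁ - x₂, hath - h⟫) := by
    rw [hφ, hφ, hφ, hφ, ep1, ep2, ep3, ep4]
    linear_combination hfp
  -- bound the difference
  have hlip := diff_lipschitz f ℓ hdiff hsmooth u hatu x₁ x₂
  have hcs : ⟪x₁ - x₂, hath - h⟫ ≤ ‖x₁ - x₂‖ * ‖hath - h‖ := real_inner_le_norm _ _
  have hmain : η * N ^ 2 ≤ (lam₁ * ℓ * ‖hatu - u‖ + 2 * c ^ 2 * ‖hath - h‖) * N := by
    have hsum : η * N ^ 2 ≤ φ hatu hath x₁ - φ u h x₁ - (φ hatu hath x₂ - φ u h x₂) := by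
      have hnr2 : ‖x₁ - x₂‖ ^ 2 = N ^ 2 := by rw [hNdef, norm_sub_rev]
      rw [hnr2] at hB
      linarith [hA, hB]
    have hf' : lam₁ * (f (x₁ - hatu) - f (x₁ - u) - (f (x₂ - hatu) - f (x₂ - u)))
        ≤ lam₁ * (ℓ * ‖hatu - u‖ * ‖x₁ - x₂‖) := mul_le_mul_of_nonneg_left hlip hlam₁.le
    have hc2pos : (0:ℝ) < c ^ 2 := by positivity
    have hin : 2 * (c ^ 2 * ⟪x₁ - x₂, hath - h⟫) ≤ 2 * c ^ 2 * (‖x₁ - x₂‖ * ‖hath - h‖) := by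
      have := mul_le_mul_of_nonneg_left hcs (by positivity : (0:ℝ) ≤ 2 * c ^ 2)
      linarith
    have hrev : ‖x₁ - x₂‖ = N := by rw [hNdef, norm_sub_rev]
    rw [hD] at hsum
    rw [hrev] at hf' hin
    have : (lam₁ * ℓ * ‖hatu - u‖ + 2 * c ^ 2 * ‖hath - h‖) * N
        = lam₁ * (ℓ * ‖hatu - u‖ * N) + 2 * c ^ 2 * (N * ‖hath - h‖) := by ring
    linarith
  have hN0 : 0 ≤ N := norm_nonneg _
  have hc2eq : 2 * c ^ 2 = 2 / ((w : ℝ) + 1) ^ 2 := by rw [hc2]; ring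
  show N ≤ (1 / η) * (lam₁ * ℓ * ‖hatu - u‖ + 2 / ((w : ℝ) + 1) ^ 2 * ‖hath - h‖)
  rcases eq_or_lt_of_le hN0 with hN | hN
  · rw [← hN]
    positivity
  · have hη' : η * N ≤ lam₁ * ℓ * ‖hatu - u‖ + 2 / ((w : ℝ) + 1) ^ 2 * ‖hath - h‖ := by
      rw [← hc2eq]
      have h4 := le_of_mul_le_mul_right (by nlinarith [hmain] :
        η * N * N ≤ (lam₁ * ℓ * ‖hatu - u‖ + 2 * c ^ 2 * ‖hath - h‖) * N) hN
      linarith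
    calc N = (1 / η) * (η * N) := by field_simp
      _ ≤ (1 / η) * (lam₁ * ℓ * ‖hatu - u‖ + 2 / ((w : ℝ) + 1) ^ 2 * ‖hath - h‖) :=
        mul_le_mul_of_nonneg_left hη' (by positivity)
end

section
/- Let f : ℝ^d → ℝ be m-strongly convex, let λ₁, λ₂ > 0, w ∈ ℕ, τ, z, h ∈ ℝ^d, and define g(u) = min_x [ ‖(x + u + h)/(w+1) − τ‖² + λ₁ f(x) + λ₂ ‖x + u − z‖² ]. Then g is η₂-strongly convex with η₂ = m λ₁ (1 − m λ₁ / η), where η = 2/(w+1)² + m λ₁ + 2λ₂. -/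
open RealInnerProductSpace

private lemma norm_combo_sq' {E : Type*} [NormedAddCommGroup E] [InnerProductSpace ℝ E]
    (p q : E) (a b : ℝ) (hab : a + b = 1) :
    ‖a • p + b • q‖ ^ 2 = a * ‖p‖ ^ 2 + b * ‖q‖ ^ 2 - a * b * ‖p - q‖ ^ 2 := by
  have h1 : ‖a • p + b • q‖ ^ 2 = ‖a • p‖ ^ 2 + 2 * ⟪a • p, b • q⟫ + ‖b • q‖ ^ 2 :=
    norm_add_sq_real _ _
  have h2 : ‖p - q‖ ^ 2 = ‖p‖ ^ 2 - 2 * ⟪p, q⟫ + ‖q‖ ^ 2 := norm_sub_sq_real _ _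
  have h3 : ⟪a • p, b • q⟫ = a * b * ⟪p, q⟫ := by
    rw [real_inner_smul_left, real_inner_smul_right]; ring
  have h4 : ‖a • p‖ ^ 2 = a ^ 2 * ‖p‖ ^ 2 := by
    rw [norm_smul, mul_pow, Real.norm_eq_abs, sq_abs]
  have h5 : ‖b • q‖ ^ 2 = b ^ 2 * ‖q‖ ^ 2 := by
    rw [norm_smul, mul_pow, Real.norm_eq_abs, sq_abs]
  have hb : b = 1 - a := by linarith
  subst hb
  rw [h1, h3, h4, h5, h2]; ring

private lemma key_ineq' {E : Type*} [NormedAddCommGroup E] [InnerProductSpace ℝ E]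
    (dx du : E) (c μ η η₂ : ℝ) (hc : 0 < c) (hμ : 0 < μ)
    (hη : η = 2 * c + μ) (hη₂ : η₂ * η = 2 * μ * c) :
    η₂ / 2 * ‖du‖ ^ 2 ≤ c * ‖dx + du‖ ^ 2 + μ / 2 * ‖dx‖ ^ 2 := by
  have hηpos : 0 < η := by rw [hη]; linarith
  have h1 : ‖dx + du‖ ^ 2 = ‖dx‖ ^ 2 + 2 * ⟪dx, du⟫ + ‖du‖ ^ 2 := norm_add_sq_real dx du
  have h2 : -(‖dx‖ * ‖du‖) ≤ ⟪dx, du⟫ := neg_le_of_abs_le (abs_real_inner_le_norm dx du)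
  have hX : (0:ℝ) ≤ ‖dx‖ := norm_nonneg _
  have hY : (0:ℝ) ≤ ‖du‖ := norm_nonneg _
  have e1 : η * (η₂ / 2 * ‖du‖ ^ 2) = μ * c * ‖du‖ ^ 2 := by
    linear_combination (‖du‖ ^ 2 / 2) * hη₂
  have main : η * (η₂ / 2 * ‖du‖ ^ 2) ≤
      η * (c * ‖dx + du‖ ^ 2 + μ / 2 * ‖dx‖ ^ 2) := by
    rw [e1, h1, hη]
    nlinarith [sq_nonneg ((2 * c + μ) * ‖dx‖ - 2 * c * ‖du‖),
      mul_nonneg (mul_nonneg hc.le (show (0:ℝ) ≤ 2 * c + μ by linarith))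
        (show (0:ℝ) ≤ ⟪dx, du⟫ + ‖dx‖ * ‖du‖ by linarith)]
  exact le_of_mul_le_mul_left main hηpos

set_option maxHeartbeats 1000000 in
/-- the partially minimized objective
`g(u) = min_x [ ‖(x+u+h)/(w+1) − τ‖² + λ₁ f(x) + λ₂‖x+u−z‖² ]`
is `η₂`-strongly convex with `η₂ = m λ₁ (1 − m λ₁/η)`, `η = 2/(w+1)² + m λ₁ + 2λ₂`. -/
theorem stmt_6 (d : ℕ) (f : EuclideanSpace ℝ (Fin d) → ℝ) (m lam₁ lam₂ : ℝ) (w : ℕ)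
    (τ z h : EuclideanSpace ℝ (Fin d))
    (hm : 0 < m) (hlam₁ : 0 < lam₁) (hlam₂ : 0 < lam₂)
    (hstrong : StrongConvexOn Set.univ m f)
    (obj : EuclideanSpace ℝ (Fin d) → EuclideanSpace ℝ (Fin d) → ℝ)
    (hobj : ∀ u xx, obj u xx =
      ‖((w : ℝ) + 1)⁻¹ • (xx + u + h) - τ‖ ^ 2 + lam₁ * f xx + lam₂ * ‖xx + u - z‖ ^ 2)
    (X : EuclideanSpace ℝ (Fin d) → EuclideanSpace ℝ (Fin d))
    (hX : ∀ u xx, obj u (X u) ≤ obj u xx)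
    (g : EuclideanSpace ℝ (Fin d) → ℝ)
    (hg : ∀ u, g u = obj u (X u))
    (η η₂ : ℝ)
    (hη : η = 2 / ((w : ℝ) + 1) ^ 2 + m * lam₁ + 2 * lam₂)
    (hη₂ : η₂ = m * lam₁ * (1 - m * lam₁ / η)) :
    StrongConvexOn Set.univ η₂ g := by
  constructor
  · exact convex_univ
  intro u₁ _ u₂ _ a b ha hb hab
  have hwpos : (0:ℝ) < (w : ℝ) + 1 := by positivity
  set μ : ℝ := m * lam₁ with hμdef
  set c : ℝ := ((w : ℝ) + 1)⁻¹ ^ 2 + lam₂ with hcdef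
  have hc : 0 < c := by positivity
  have hμ : 0 < μ := mul_pos hm hlam₁
  have hη' : η = 2 * c + μ := by
    rw [hη, hcdef, inv_pow]
    field_simp
    ring
  have hηpos : 0 < η := by rw [hη']; linarith
  have hη₂' : η₂ * η = 2 * μ * c := by
    have hfrac : (1 - μ / η) * η = η - μ := by field_simp
    rw [hη₂, mul_assoc, hfrac, hη']; ring
  set x₁ := X u₁ with hx₁
  set x₂ := X u₂ with hx₂
  set uγ := a • u₁ + b • u₂ with huγ
  set xγ := a • x₁ + b • x₂ with hxγ
  have hb1 : b = 1 - a := by linarith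
  set p₁ := ((w : ℝ) + 1)⁻¹ • (x₁ + u₁ + h) - τ with hp₁
  set p₂ := ((w : ℝ) + 1)⁻¹ • (x₂ + u₂ + h) - τ with hp₂
  set q₁ := x₁ + u₁ - z with hq₁
  set q₂ := x₂ + u₂ - z with hq₂
  have e1 : ((w : ℝ) + 1)⁻¹ • (xγ + uγ + h) - τ = a • p₁ + b • p₂ := by
    rw [hp₁, hp₂, hxγ, huγ, hb1]; module
  have e2 : xγ + uγ - z = a • q₁ + b • q₂ := by
    rw [hq₁, hq₂, hxγ, huγ, hb1]; module
  have ep : p₁ - p₂ = ((w : ℝ) + 1)⁻¹ • ((x₁ + u₁) - (x₂ + u₂)) := by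
    rw [hp₁, hp₂]; module
  have eq' : q₁ - q₂ = (x₁ + u₁) - (x₂ + u₂) := by
    rw [hq₁, hq₂]; abel
  have np : ‖p₁ - p₂‖ ^ 2 = ((w : ℝ) + 1)⁻¹ ^ 2 * ‖(x₁ + u₁) - (x₂ + u₂)‖ ^ 2 := by
    rw [ep, norm_smul, mul_pow, Real.norm_eq_abs, sq_abs]
  have hf : f xγ ≤ a • f x₁ + b • f x₂ - a * b * (m / 2 * ‖x₁ - x₂‖ ^ 2) :=
    hstrong.2 (Set.mem_univ x₁) (Set.mem_univ x₂) ha hb hab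
  simp only [smul_eq_mul] at hf
  have hsplit : obj uγ xγ ≤ a * obj u₁ x₁ + b * obj u₂ x₂
      - a * b * (c * ‖(x₁ + u₁) - (x₂ + u₂)‖ ^ 2 + μ / 2 * ‖x₁ - x₂‖ ^ 2) := by
    rw [hobj uγ xγ, hobj u₁ x₁, hobj u₂ x₂, ← hp₁, ← hp₂, ← hq₁, ← hq₂, e1, e2,
      norm_combo_sq' p₁ p₂ a b hab, norm_combo_sq' q₁ q₂ a b hab, np, eq', hcdef, hμdef]
    nlinarith [mul_le_mul_of_nonneg_left hf hlam₁.le, mul_nonneg ha hb]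
  have hkey : η₂ / 2 * ‖u₁ - u₂‖ ^ 2 ≤
      c * ‖(x₁ + u₁) - (x₂ + u₂)‖ ^ 2 + μ / 2 * ‖x₁ - x₂‖ ^ 2 := by
    have hd : (x₁ - x₂) + (u₁ - u₂) = (x₁ + u₁) - (x₂ + u₂) := by abel
    have := key_ineq' (x₁ - x₂) (u₁ - u₂) c μ η η₂ hc hμ hη' hη₂'
    rwa [hd] at this
  have step1 : g uγ ≤ obj uγ xγ := by rw [hg]; exact hX _ _
  have hfin := mul_le_mul_of_nonneg_left hkey (mul_nonneg ha hb)
  simp only [smul_eq_mul]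
  have hgu₁ : g u₁ = obj u₁ x₁ := hg u₁
  have hgu₂ : g u₂ = obj u₂ x₂ := hg u₂
  rw [hgu₁, hgu₂]
  linarith [step1, hsplit, hfin]
end

section
/- Let w ∈ ℕ, λ₁, λ₂, m > 0 satisfy 2w² < 2 + m λ₁ (w+1)². Then there exist α, β > 0 such that 2α + 2λ₂ + 2(1+β) w²/(w+1)² ≤ 2/(w+1)² + m λ₁ + 2λ₂, and for any such choice, max{1 + 1/β, 1 + λ₂/α} ≤ 1 + 2(λ₂(w+1)² + w²)/(m λ₁ (w+1)² + 2 − 2w²). -/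
/-- parameter-selection step in the competitive-ratio proof for IGA. -/
theorem stmt_9 (m lam₁ lam₂ : ℝ) (w : ℕ)
    (hm : 0 < m) (hlam₁ : 0 < lam₁) (hlam₂ : 0 < lam₂)
    (hcond : 2 * (w : ℝ) ^ 2 < 2 + m * lam₁ * ((w : ℝ) + 1) ^ 2) :
    ∃ α β : ℝ, 0 < α ∧ 0 < β ∧
      2 * α + 2 * lam₂ + 2 * (1 + β) * (w : ℝ) ^ 2 / ((w : ℝ) + 1) ^ 2
        ≤ 2 / ((w : ℝ) + 1) ^ 2 + m * lam₁ + 2 * lam₂ ∧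
      max (1 + 1 / β) (1 + lam₂ / α)
        ≤ 1 + 2 * (lam₂ * ((w : ℝ) + 1) ^ 2 + (w : ℝ) ^ 2) /
            (m * lam₁ * ((w : ℝ) + 1) ^ 2 + 2 - 2 * (w : ℝ) ^ 2) := by
  set W : ℝ := (w : ℝ) with hW
  have hW0 : 0 ≤ W := Nat.cast_nonneg w
  have hw1 : 0 < (W + 1) ^ 2 := by positivity
  set D : ℝ := m * lam₁ * (W + 1) ^ 2 + 2 - 2 * W ^ 2 with hD
  have hD0 : 0 < D := by simp only [hD]; nlinarith
  set S : ℝ := lam₂ * (W + 1) ^ 2 + W ^ 2 with hS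
  have hS0 : 0 < S := by positivity
  refine ⟨lam₂ * D / (2 * S), D / (2 * S), by positivity, by positivity, ?_, ?_⟩
  · have e1 : 2 * (lam₂ * D / (2 * S)) + 2 * lam₂
        + 2 * (1 + D / (2 * S)) * W ^ 2 / (W + 1) ^ 2
        = 2 / (W + 1) ^ 2 + m * lam₁ + 2 * lam₂ := by
      simp only [hD, hS]
      field_simp
      ring
    linarith [e1.le]
  · have heq : lam₂ / (lam₂ * D / (2 * S)) = 1 / (D / (2 * S)) := by
      field_simp
    rw [heq, max_self, one_div_div]
end

section
/- Let f : ℝ^d → ℝ be m-strongly convex, ℓ-smooth, minimized at 0 with f(0) = 0. Fix τ, z, h ∈ ℝ^d, λ₁, λ₂ > 0, w ∈ ℕ, and let x(u) = argmin_x [ ‖(x+h)/(w+1) − τ‖² + λ₁ f(x − u) + λ₂‖x − z‖² ]. Then the map u ↦ x(u) is (λ₁ℓ/η)-Lipschitz, where η = 2/(w+1)² + mλ₁ + 2λ₂, and since mλ₁ < η we have λ₁ℓ/η < ℓ/m when ℓ and constants satisfy λ₁ℓ < (ℓ/m)η; in particular ‖x(u₁) − x(u₂)‖ ≤ (λ₁ℓ/η)‖u₁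 − u₂‖ for all u₁, u₂. -/
open RealInnerProductSpace

lemma combo_sq {E : Type*} [NormedAddCommGroup E] [InnerProductSpace ℝ E]
    (X Y : E) (a b : ℝ) (hab : a + b = 1) :
    ‖a • X + b • Y‖ ^ 2 = a * ‖X‖ ^ 2 + b * ‖Y‖ ^ 2 - a * b * ‖X - Y‖ ^ 2 := by
  have hb : b = 1 - a := by linarith
  subst hb
  have h1 : ⟪a • X + (1-a) • Y, a • X + (1-a) • Y⟫ = ‖a • X + (1-a) • Y‖ ^ 2 :=
    real_inner_self_eq_norm_sq _
  have h2 : ⟪X - Y, X - Y⟫ = ‖X - Y‖ ^ 2 := real_inner_self_eq_norm_sq _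
  have h3 : ⟪X, X⟫ = ‖X‖ ^ 2 := real_inner_self_eq_norm_sq _
  have h4 : ⟪Y, Y⟫ = ‖Y‖ ^ 2 := real_inner_self_eq_norm_sq _
  simp only [inner_add_add_self, inner_sub_sub_self, real_inner_smul_left,
    real_inner_smul_right] at h1 h2
  have hc := real_inner_comm X Y
  linear_combination (-1 : ℝ) * h1 + (-(a*(1-a))) * h2 + a * h3 + (1-a) * h4
    + (a*(1-a) - a*(1-a)) * hc

set_option maxHeartbeats 1000000 in
/-- the argmin map `u ↦ x(u)` (history fixed) is
`(λ₁ℓ/η)`-Lipschitz, `η = 2/(w+1)² + mλ₁ + 2λ₂`. -/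
theorem stmt_18 (d : ℕ) (f : EuclideanSpace ℝ (Fin d) → ℝ) (m ℓ lam₁ lam₂ : ℝ) (w : ℕ)
    (τ z h : EuclideanSpace ℝ (Fin d))
    (hm : 0 < m) (hℓ : 0 < ℓ) (hlam₁ : 0 < lam₁) (hlam₂ : 0 < lam₂)
    (hdiff : Differentiable ℝ f)
    (hstrong : StrongConvexOn Set.univ m f)
    (hsmooth : ∀ a b, ‖gradient f a - gradient f b‖ ≤ ℓ * ‖a - b‖)
    (hmin0 : ∀ x, f 0 ≤ f x) (hf0 : f 0 = 0)
    (obj : EuclideanSpace ℝ (Fin d) → EuclideanSpace ℝ (Fin d) → ℝ)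
    (hobj : ∀ u xx, obj u xx =
      ‖((w : ℝ) + 1)⁻¹ • (xx + h) - τ‖ ^ 2 + lam₁ * f (xx - u) + lam₂ * ‖xx - z‖ ^ 2)
    (xmin : EuclideanSpace ℝ (Fin d) → EuclideanSpace ℝ (Fin d))
    (hxmin : ∀ u xx, obj u (xmin u) ≤ obj u xx)
    (η : ℝ) (hη : η = 2 / ((w : ℝ) + 1) ^ 2 + m * lam₁ + 2 * lam₂) :
    ∀ u₁ u₂, ‖xmin u₁ - xmin u₂‖ ≤ lam₁ * ℓ / η * ‖u₁ - u₂‖ := by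
  set c : ℝ := ((w : ℝ) + 1)⁻¹ with hc
  have hw1 : (0:ℝ) < (w:ℝ) + 1 := by positivity
  have hcpos : 0 < c := by positivity
  have hc2 : 2 / ((w : ℝ) + 1) ^ 2 = 2 * c ^ 2 := by
    rw [hc]; field_simp
  have hηpos : 0 < η := by
    rw [hη, hc2]; positivity
  have hη2 : η / 2 = c ^ 2 + m * lam₁ / 2 + lam₂ := by
    rw [hη, hc2]; ring
  -- strong convexity of obj u in x
  have key : ∀ (u x y : EuclideanSpace ℝ (Fin d)) (a b : ℝ), 0 ≤ a → 0 ≤ b → a + b = 1 →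
      obj u (a • x + b • y) ≤ a * obj u x + b * obj u y - a * b * (η/2) * ‖x - y‖ ^ 2 := by
    intro u x y a b ha hbnn hab
    have hb : b = 1 - a := by linarith
    rw [hobj, hobj, hobj, hη2]
    have e1 : c • ((a • x + b • y) + h) - τ = a • (c • (x + h) - τ) + b • (c • (y + h) - τ) := by
      subst hb; module
    have e1' : (c • (x + h) - τ) - (c • (y + h) - τ) = c • (x - y) := by module
    have e3 : (a • x + b • y) - z = a • (x - z) + b • (y - z) := by
      subst hb; module
    have e3' : (x - z) - (y - z) = x - y := by module
    have e2 : (a • x + b • y) - u = a • (x - u) + b • (y - u) := by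
      subst hb; module
    have e2' := hstrong.2 (Set.mem_univ (x - u)) (Set.mem_univ (y - u)) ha hbnn hab
    have e2'' : (x - u) - (y - u) = x - y := by module
    rw [e2'', smul_eq_mul, smul_eq_mul] at e2'
    simp only at e2'
    have t1 : ‖c • ((a • x + b • y) + h) - τ‖ ^ 2
        = a * ‖c • (x + h) - τ‖ ^ 2 + b * ‖c • (y + h) - τ‖ ^ 2
          - a * b * (c ^ 2 * ‖x - y‖ ^ 2) := by
      have hns : ‖c • (x - y)‖ ^ 2 = c ^ 2 * ‖x - y‖ ^ 2 := by
        rw [norm_smul, Real.norm_eq_abs, mul_pow, sq_abs]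
      rw [e1, combo_sq _ _ _ _ hab, e1', hns]
    have t3 : lam₂ * ‖(a • x + b • y) - z‖ ^ 2
        = lam₂ * (a * ‖x - z‖ ^ 2 + b * ‖y - z‖ ^ 2 - a * b * ‖x - y‖ ^ 2) := by
      rw [e3, combo_sq _ _ _ _ hab, e3']
    have t2 : lam₁ * f ((a • x + b • y) - u) ≤ lam₁ * (a * f (x - u) + b * f (y - u)
        - a * b * (m / 2 * ‖x - y‖ ^ 2)) := by
      rw [e2]; exact mul_le_mul_of_nonneg_left e2' hlam₁.le
    linarith [t1, t3, t2]
  -- minimizer inequality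
  have min_ineq : ∀ (u y : EuclideanSpace ℝ (Fin d)),
      obj u (xmin u) + η / 2 * ‖y - xmin u‖ ^ 2 ≤ obj u y := by
    intro u y
    refine le_of_forall_pos_le_add ?_
    intro ε hε
    set D : ℝ := η / 2 * ‖y - xmin u‖ ^ 2 with hD
    have hDnn : 0 ≤ D := by positivity
    set t : ℝ := min 1 (ε / (D + 1)) with ht
    have htpos : 0 < t := lt_min one_pos (by positivity)
    have ht1 : t ≤ 1 := min_le_left _ _
    have hkey := key u y (xmin u) t (1 - t) htpos.le (by linarith) (by ring)
    have hmin := hxmin u (t • y + (1 - t) • xmin u)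
    have step : obj u (xmin u) + (1 - t) * D ≤ obj u y := by
      have h2 : t * obj u (xmin u) ≤ t * obj u y - t * (1 - t) * (η/2) * ‖y - xmin u‖ ^ 2 := by
        linarith [hkey, hmin]
      have h3 : t * (obj u (xmin u) + (1 - t) * D) ≤ t * obj u y := by
        rw [hD]; linarith [h2]
      have := (mul_le_mul_iff_right₀ htpos).mp h3
      linarith
    have htD : t * D ≤ ε := by
      have h1 : t ≤ ε / (D + 1) := min_le_right _ _
      have h2 : t * D ≤ (ε / (D + 1)) * D := mul_le_mul_of_nonneg_right h1 hDnn
      have h3 : (ε / (D + 1)) * D ≤ ε := by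
        rw [div_mul_eq_mul_div, div_le_iff₀ (by positivity)]
        nlinarith
      linarith
    linarith [step, htD]
  intro u₁ u₂
  set x₁ := xmin u₁ with hx₁
  set x₂ := xmin u₂ with hx₂
  have H1 := min_ineq u₁ x₂
  have H2 := min_ineq u₂ x₁
  have hnr : ‖x₂ - x₁‖ = ‖x₁ - x₂‖ := norm_sub_rev _ _
  rw [hnr] at H1
  -- Lipschitz bound on g = f(· - u₁) - f(· - u₂)
  have hfd_bound : ∀ a b : EuclideanSpace ℝ (Fin d),
      ‖fderiv ℝ f a - fderiv ℝ f b‖ ≤ ℓ * ‖a - b‖ := by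
    intro a b
    have heq : fderiv ℝ f a - fderiv ℝ f b
        = (InnerProductSpace.toDual ℝ (EuclideanSpace ℝ (Fin d)))
            (gradient f a - gradient f b) := by
      simp only [gradient, map_sub, LinearIsometryEquiv.apply_symm_apply]
    rw [heq, LinearIsometryEquiv.norm_map]
    exact hsmooth a b
  set g : EuclideanSpace ℝ (Fin d) → ℝ := fun x => f (x - u₁) - f (x - u₂) with hg
  have hgderiv : ∀ x, HasFDerivAt g (fderiv ℝ f (x - u₁) - fderiv ℝ f (x - u₂)) x := by
    intro x
    have d1 : HasFDerivAt (fun x : EuclideanSpace ℝ (Fin d) => f (x - u₁))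
        (fderiv ℝ f (x - u₁)) x := by
      simpa [Function.comp_def] using (hdiff (x - u₁)).hasFDerivAt.comp x ((hasFDerivAt_id x).sub_const u₁)
    have d2 : HasFDerivAt (fun x : EuclideanSpace ℝ (Fin d) => f (x - u₂))
        (fderiv ℝ f (x - u₂)) x := by
      simpa [Function.comp_def] using (hdiff (x - u₂)).hasFDerivAt.comp x ((hasFDerivAt_id x).sub_const u₂)
    exact d1.sub d2
  have glip : ‖g x₂ - g x₁‖ ≤ ℓ * ‖u₁ - u₂‖ * ‖x₂ - x₁‖ := by
    apply Convex.norm_image_sub_le_of_norm_fderiv_le (s := Set.univ)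
      (fun x _ => (hgderiv x).differentiableAt) ?_ convex_univ (Set.mem_univ _) (Set.mem_univ _)
    intro x _
    rw [(hgderiv x).fderiv]
    have hb := hfd_bound (x - u₁) (x - u₂)
    have e : (x - u₁) - (x - u₂) = u₂ - u₁ := by module
    rw [e, norm_sub_rev u₂ u₁] at hb
    exact hb
  -- combine
  have hsum : η * ‖x₁ - x₂‖ ^ 2 ≤ lam₁ * (g x₂ - g x₁) := by
    have e1 := hobj u₁ x₁
    have e2 := hobj u₁ x₂
    have e3 := hobj u₂ x₁
    have e4 := hobj u₂ x₂
    simp only [hg]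
    linarith [H1, H2, e1, e2, e3, e4]
  have hfinal : η * ‖x₁ - x₂‖ ^ 2 ≤ lam₁ * ℓ * ‖u₁ - u₂‖ * ‖x₁ - x₂‖ := by
    have h1 : g x₂ - g x₁ ≤ ℓ * ‖u₁ - u₂‖ * ‖x₂ - x₁‖ :=
      (le_abs_self _).trans (by rwa [← Real.norm_eq_abs])
    rw [hnr] at h1
    have h2 := mul_le_mul_of_nonneg_left h1 hlam₁.le
    linarith [hsum, h2]
  rcases eq_or_lt_of_le (norm_nonneg (x₁ - x₂)) with h0 | h0
  · rw [← h0]; positivity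
  · rw [div_mul_eq_mul_div, le_div_iff₀ hηpos]
    nlinarith [hfinal, h0]
end
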